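/- Let Q be a lower transition rate operator on a finite nonempty set 𝒳, and let (T_t)_{t≥0} be the associated family of operators determined by the differential equation d/dt T_t f = Q(T_t f) with T_0 f = f. Consider any f ∈ 𝓛(𝒳) and x ∈ 𝒳 such that f(x) > min f. Then for all t ≥ 0: T_t f(x) > min f. -/

import Mathlib

open Filter Topology

/-- The minimum of a real-valued function on a finite nonempty type. -/
noncomputable def minf {X : Type*} [Fintype X] [Nonempty X] (f : X → ℝ) : ℝ :=
  Finset.univ.inf' Finset.univ_nonempty f

/-- The maximum of a real-valued function on a finite nonempty type. -/
noncomputable def maxf {X : Type*} [Fintype X] [Nonempty X] (f : X → ℝ) : ℝ :=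
  Finset.univ.sup' Finset.univ_nonempty f

/-- The (real-valued) indicator function of a set. -/
noncomputable def ind {X : Type*} (A : Set X) : X → ℝ := A.indicator 1

/-- The conjugate (upper) operator `f ↦ -(Q (-f))`. -/
def conjOp {X : Type*} (Q : (X → ℝ) → (X → ℝ)) : (X → ℝ) → (X → ℝ) :=
  fun f => -(Q (-f))

/-- A lower transition rate operator. -/
def IsLTRO {X : Type*} [Fintype X] (Q : (X → ℝ) → (X → ℝ)) : Prop :=
  (∀ μ : ℝ, Q (fun _ => μ) = 0) ∧
  (∀ f g : X → ℝ, Q f + Q g ≤ Q (f + g)) ∧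
  (∀ l : ℝ, 0 ≤ l → ∀ f : X → ℝ, Q (l • f) = l • Q f) ∧
  (∀ x y : X, x ≠ y → 0 ≤ Q (ind {y}) x)

/-- A lower transition operator. -/
def IsLTO {X : Type*} [Fintype X] [Nonempty X] (T : (X → ℝ) → (X → ℝ)) : Prop :=
  (∀ f : X → ℝ, ∀ x : X, minf f ≤ T f x) ∧
  (∀ f g : X → ℝ, T f + T g ≤ T (f + g)) ∧
  (∀ l : ℝ, 0 ≤ l → ∀ f : X → ℝ, T (l • f) = l • T f)

/-- `T` is the family of operators solving `d/dt T_t f = Q (T_t f)` on `[0,∞)`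
with `T_0 f = f`. -/
def IsSol {X : Type*} [Fintype X] (Q : (X → ℝ) → (X → ℝ))
    (T : ℝ → (X → ℝ) → (X → ℝ)) : Prop :=
  (∀ f : X → ℝ, T 0 f = f) ∧
  (∀ f : X → ℝ, ∀ t : ℝ, 0 ≤ t →
    HasDerivWithinAt (fun s => T s f) (Q (T t f)) (Set.Ici 0) t)

/-- Ergodicity of a lower transition rate operator, expressed via its
associated time-dependent family `T`. -/
def ErgodicQ {X : Type*} [Fintype X] (T : ℝ → (X → ℝ) → (X → ℝ)) : Prop :=
  ∀ f : X → ℝ, ∃ c : ℝ, Tendsto (fun t => T t f) atTop (𝓝 (fun _ : X => c))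

/-- Ergodicity of a lower transition operator. -/
def ErgodicT {X : Type*} [Fintype X] (T : (X → ℝ) → (X → ℝ)) : Prop :=
  ∀ f : X → ℝ, ∃ c : ℝ, Tendsto (fun n : ℕ => T^[n] f) atTop (𝓝 (fun _ : X => c))

/-- `x` is upper reachable from `y` (w.r.t. the lower transition rate operator `Q`). -/
def upperReach {X : Type*} [Fintype X] (Q : (X → ℝ) → (X → ℝ)) (y x : X) : Prop :=
  ∃ (n : ℕ) (p : ℕ → X), p 0 = y ∧ p n = x ∧
    ∀ k : ℕ, k < n → p (k + 1) ≠ p k ∧ 0 < conjOp Q (ind {p (k + 1)}) (p k)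

/-- One step of the lower-reachability construction: `A ↦ A ∪ {y ∉ A : Q(𝟙_A)(y) > 0}`. -/
def lowerStep {X : Type*} [Fintype X] (Q : (X → ℝ) → (X → ℝ)) (A : Set X) : Set X :=
  A ∪ {y : X | y ∉ A ∧ 0 < Q (ind A) y}

/-- `A` is lower reachable from `x`: `x ∈ Aₙ` where `n` is the first index with
`Aₙ = Aₙ₊₁` (equivalently, any such index, since the sequence is determined by
recursion and increasing). -/
def lowerReach {X : Type*} [Fintype X] (Q : (X → ℝ) → (X → ℝ)) (x : X) (A : Set X) : Prop :=
  ∃ n : ℕ, (lowerStep Q)^[n] A = (lowerStep Q)^[n + 1] A ∧ x ∈ (lowerStep Q)^[n] A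

/-- The set `𝒳_RA := {x : ∃ n ≥ 1, min T̄ⁿ 𝟙ₓ > 0}`. -/
noncomputable def XRA {X : Type*} [Fintype X] [Nonempty X]
    (T : (X → ℝ) → (X → ℝ)) : Set X :=
  {x : X | ∃ n : ℕ, 0 < minf ((conjOp T)^[n + 1] (ind {x}))}

/-- A regularly absorbing lower transition operator. -/
def RegAbs {X : Type*} [Fintype X] [Nonempty X] (T : (X → ℝ) → (X → ℝ)) : Prop :=
  (XRA T).Nonempty ∧ ∀ x : X, x ∉ XRA T → ∃ n : ℕ, 0 < T^[n + 1] (ind (XRA T)) x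

/-- The set `𝒳_1A := {x : min T̄ 𝟙ₓ > 0}`. -/
noncomputable def X1A {X : Type*} [Fintype X] [Nonempty X]
    (T : (X → ℝ) → (X → ℝ)) : Set X :=
  {x : X | 0 < minf (conjOp T (ind {x}))}

/-- A 1-step absorbing lower transition operator. -/
def OneStepAbs {X : Type*} [Fintype X] [Nonempty X] (T : (X → ℝ) → (X → ℝ)) : Prop :=
  (X1A T).Nonempty ∧ ∀ x : X, x ∉ X1A T → 0 < T (ind (X1A T)) x

/-- The operator (sup) norm of a non-negatively homogeneous operator. -/
noncomputable def opN {X : Type*} [Fintype X] (Q : (X → ℝ) → (X → ℝ)) : ℝ :=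
  sSup {r : ℝ | ∃ f : X → ℝ, ‖f‖ = 1 ∧ r = ‖Q f‖}

section AuxStmt18

open Set Filter Topology

variable {X : Type*} [Fintype X]

lemma ltro_sum_le {ι : Type*} {Q : (X → ℝ) → (X → ℝ)} (hQ : IsLTRO Q)
    (s : Finset ι) (F : ι → X → ℝ) :
    ∑ i ∈ s, Q (F i) ≤ Q (∑ i ∈ s, F i) := by
  classical
  induction s using Finset.induction_on with
  | empty =>
    have h0 : Q 0 = 0 := hQ.1 0
    simp [h0]
  | insert a s' h ih =>
    rw [Finset.sum_insert h, Finset.sum_insert h]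
    calc Q (F a) + ∑ i ∈ s', Q (F i) ≤ Q (F a) + Q (∑ i ∈ s', F i) :=
          add_le_add_right ih _
      _ ≤ Q (F a + ∑ i ∈ s', F i) := hQ.2.1 _ _

lemma ltro_key {Q : (X → ℝ) → (X → ℝ)} (hQ : IsLTRO Q)
    (g : X → ℝ) (c : ℝ) (hc : ∀ z, c ≤ g z) (y : X) :
    (g y - c) * Q (ind {y}) y ≤ Q g y := by
  classical
  have hdec : g = (fun _ => c) + ∑ z : X, (g z - c) • ind {z} := by
    funext w
    simp only [Pi.add_apply, Finset.sum_apply, Pi.smul_apply, smul_eq_mul, ind,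
      Set.indicator_apply, Set.mem_singleton_iff, Pi.one_apply, mul_ite, mul_one, mul_zero]
    rw [Finset.sum_ite_eq Finset.univ w (fun z => g z - c)]
    simp
  have h1 : Q (fun _ => c) + Q (∑ z : X, (g z - c) • ind {z}) ≤ Q g := by
    conv_rhs => rw [hdec]
    exact hQ.2.1 _ _
  rw [hQ.1 c, zero_add] at h1
  have h2 : ∑ z : X, (g z - c) • Q (ind {z}) ≤ Q (∑ z : X, (g z - c) • ind {z}) := by
    refine le_trans (le_of_eq ?_) (ltro_sum_le hQ _ _)
    exact Finset.sum_congr rfl fun z _ => (hQ.2.2.1 _ (sub_nonneg.2 (hc z)) _).symm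
  have h4 := (le_trans h2 h1) y
  rw [Finset.sum_apply] at h4
  refine le_trans ?_ h4
  rw [← Finset.add_sum_erase Finset.univ _ (Finset.mem_univ y)]
  have hnn : 0 ≤ ∑ z ∈ Finset.univ.erase y, ((g z - c) • Q (ind {z})) y := by
    refine Finset.sum_nonneg fun z hz => ?_
    have hzy : y ≠ z := (Finset.ne_of_mem_erase hz).symm
    simp only [Pi.smul_apply, smul_eq_mul]
    exact mul_nonneg (sub_nonneg.2 (hc z)) (hQ.2.2.2 y z hzy)
  simp only [Pi.smul_apply, smul_eq_mul] at hnn ⊢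
  linarith

lemma ltro_min_nonneg [Nonempty X] {Q : (X → ℝ) → (X → ℝ)} (hQ : IsLTRO Q)
    (g : X → ℝ) (y : X) (hy : g y = minf g) : 0 ≤ Q g y := by
  have := ltro_key hQ g (minf g) (fun z => Finset.inf'_le g (Finset.mem_univ z)) y
  rw [hy] at this
  simpa using this

lemma sol_comp_deriv {Q : (X → ℝ) → (X → ℝ)} {T : ℝ → (X → ℝ) → (X → ℝ)}
    (hT : IsSol Q T) (f : X → ℝ) (y : X) {t : ℝ} (ht : 0 ≤ t) :
    HasDerivWithinAt (fun s => T s f y) (Q (T t f) y) (Set.Ici 0) t :=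
  (ContinuousLinearMap.proj (R := ℝ) (φ := fun _ : X => ℝ) y).hasFDerivAt.comp_hasDerivWithinAt
    t (hT.2 f t ht)

lemma sol_comp_cont {Q : (X → ℝ) → (X → ℝ)} {T : ℝ → (X → ℝ) → (X → ℝ)}
    (hT : IsSol Q T) (f : X → ℝ) (y : X) :
    ContinuousOn (fun s => T s f y) (Set.Ici 0) :=
  fun _ ht => (sol_comp_deriv hT f y ht).continuousWithinAt

/-- Step 1: the pointwise minimum is preserved. -/
lemma sol_min_preserved [Nonempty X] {Q : (X → ℝ) → (X → ℝ)} {T : ℝ → (X → ℝ) → (X → ℝ)}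
    (hQ : IsLTRO Q) (hT : IsSol Q T) (f : X → ℝ) {b : ℝ} (hb : 0 ≤ b) :
    ∀ s ∈ Set.Icc (0:ℝ) b, ∀ y : X, minf f ≤ T s f y := by
  set m := minf f with hm
  set φ : ℝ → ℝ := fun s => m - minf (T s f) with hφ
  have hcont : ContinuousOn φ (Set.Icc 0 b) := by
    apply continuousOn_const.sub
    exact (ContinuousOn.finset_inf'_apply Finset.univ_nonempty
      (fun y _ => (sol_comp_cont hT f y).mono Set.Icc_subset_Ici_self))
  have key : ∀ s ∈ Set.Icc (0:ℝ) b, φ s ≤ 0 := by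
    intro s hs
    have := image_le_of_liminf_slope_right_le_deriv_boundary (B := fun _ => (0:ℝ))
      (B' := fun _ => (0:ℝ)) hcont ?ha continuousOn_const
      (fun _ _ => hasDerivWithinAt_const _ _ 0) ?bound hs
    · exact this
    case ha => simp [hφ, hT.1 f, hm]
    case bound =>
      intro u hu r hr
      have hu0 : (0:ℝ) ≤ u := hu.1
      set c := minf (T u f) with hc
      -- for each y, eventually in 𝓝[>] u : c - r * (z - u) < T z f y
      have hev : ∀ y : X, ∀ᶠ z in 𝓝[>] u, c - r * (z - u) < T z f y := by
        intro y
        rcases eq_or_lt_of_le (Finset.inf'_le (T u f) (Finset.mem_univ y) : c ≤ T u f y)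
          with hmin | hgt
        · -- y is a minimizer, derivative nonneg
          have hd : 0 ≤ Q (T u f) y := ltro_min_nonneg hQ (T u f) y hmin.symm
          have hslope : Tendsto (slope (fun z => T z f y) u) (𝓝[Set.Ici 0 \ {u}] u)
              (𝓝 (Q (T u f) y)) :=
            hasDerivWithinAt_iff_tendsto_slope.1 (sol_comp_deriv hT f y hu0)
          have hslope' : Tendsto (slope (fun z => T z f y) u) (𝓝[>] u)
              (𝓝 (Q (T u f) y)) := by
            apply hslope.mono_left
            apply nhdsWithin_mono
            intro z hz
            exact ⟨le_trans hu0 (le_of_lt hz), ne_of_gt hz⟩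
          have hr0 : (0:ℝ) < r := hr
          have hev1 : ∀ᶠ z in 𝓝[>] u, -r < slope (fun z => T z f y) u z :=
            hslope' (Ioi_mem_nhds (by linarith))
          filter_upwards [hev1, self_mem_nhdsWithin] with z hz hz'
          have hzu : (0:ℝ) < z - u := sub_pos.2 hz'
          rw [slope_def_field] at hz
          have : -r * (z - u) < T z f y - T u f y := by
            have := (mul_lt_mul_of_pos_right hz hzu)
            calc -r * (z - u) < (T z f y - T u f y) / (z - u) * (z - u) := this
              _ = T z f y - T u f y := by field_simp
          have hTy : c ≤ T u f y := hmin.le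
          linarith
        · -- not a minimizer: continuity
          have hcy : ContinuousWithinAt (fun z => T z f y) (Set.Ioi u) u := by
            apply (sol_comp_cont hT f y u hu0).mono
            intro z hz
            exact le_trans hu0 (le_of_lt hz)
          have hr0 : (0:ℝ) < r := hr
          have hev1 : ∀ᶠ z in 𝓝[>] u, c < T z f y :=
            hcy (Ioi_mem_nhds hgt)
          filter_upwards [hev1, self_mem_nhdsWithin] with z hz hz'
          have : (0:ℝ) < r * (z - u) := mul_pos hr0 (sub_pos.2 hz')
          linarith
      have hall : ∀ᶠ z in 𝓝[>] u, ∀ y : X, c - r * (z - u) < T z f y :=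
        eventually_all.2 hev
      apply Eventually.frequently
      filter_upwards [hall, self_mem_nhdsWithin] with z hz hz'
      have hzu : (0:ℝ) < z - u := sub_pos.2 hz'
      have hminz : c - r * (z - u) < minf (T z f) := by
        simp only [minf]
        exact (Finset.lt_inf'_iff _).2 fun y _ => hz y
      rw [slope_def_field, div_lt_iff₀ hzu]
      simp only [hφ]
      linarith [hminz, hc]
  intro s hs y
  have h1 := key s hs
  have h2 : minf (T s f) ≤ T s f y := Finset.inf'_le _ (Finset.mem_univ y)
  simp only [hφ] at h1
  linarith

end AuxStmt18

/-- If `f(x) > min f`, then `T_t f(x) > min f` for all `t ≥ 0`. -/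
theorem stmt18 {X : Type*} [Fintype X] [Nonempty X]
    (Q : (X → ℝ) → (X → ℝ)) (hQ : IsLTRO Q)
    (T : ℝ → (X → ℝ) → (X → ℝ)) (hT : IsSol Q T)
    (f : X → ℝ) (x : X) (hx : minf f < f x) :
    ∀ t : ℝ, 0 ≤ t → minf f < T t f x := by
  intro t ht
  have hmin : ∀ s ∈ Set.Icc (0:ℝ) t, ∀ z : X, minf f ≤ T s f z :=
    sol_min_preserved hQ hT f ht
  set m := minf f with hm
  set q := Q (ind {x}) x with hq
  set C : ℝ := max 0 (-q) + 1 with hC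
  have hC0 : 0 < C := by
    have : (0:ℝ) ≤ max 0 (-q) := le_max_left _ _
    linarith
  set ε := f x - m with hε
  have hε0 : 0 < ε := sub_pos.2 hx
  have hBd : ∀ s : ℝ, HasDerivAt (fun u => -(ε * Real.exp (-(C * u))))
      (C * (ε * Real.exp (-(C * s)))) s := by
    intro s
    have h1 : HasDerivAt (fun u : ℝ => -(C * u)) (-C) s := by
      exact ((hasDerivAt_id' s).const_mul C).neg.congr_deriv (by ring)
    have h2 : HasDerivAt (fun u : ℝ => Real.exp (-(C * u)))
        (Real.exp (-(C * s)) * -C) s := h1.exp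
    have h3 := (h2.const_mul ε).neg
    exact h3.congr_deriv (by ring)
  have hf2 : ContinuousOn (fun s => m - T s f x) (Set.Icc 0 t) :=
    continuousOn_const.sub ((sol_comp_cont hT f x).mono Set.Icc_subset_Ici_self)
  have hf2' : ∀ s ∈ Set.Ico (0:ℝ) t,
      HasDerivWithinAt (fun u => m - T u f x) (-(Q (T s f) x)) (Set.Ici s) s := by
    intro s hs
    have := ((sol_comp_deriv hT f x hs.1).mono (Set.Ici_subset_Ici.2 hs.1)).const_sub m
    simpa using this
  have hmain := image_le_of_deriv_right_lt_deriv_boundary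
    (f := fun s => m - T s f x) (f' := fun s => -(Q (T s f) x))
    (B := fun u => -(ε * Real.exp (-(C * u)))) (B' := fun s => C * (ε * Real.exp (-(C * s))))
    hf2 hf2' ?ha hBd ?bound (Set.right_mem_Icc.2 ht)
  case ha =>
    show m - T 0 f x ≤ -(ε * Real.exp (-(C * 0)))
    rw [hT.1 f]
    simp [hε]
  case bound =>
    intro s hs heq
    set δ := ε * Real.exp (-(C * s)) with hδ
    have hδ0 : 0 < δ := mul_pos hε0 (Real.exp_pos _)
    have hTs : T s f x - m = δ := by
      have : m - T s f x = -δ := heq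
      linarith
    have hkey := ltro_key hQ (T s f) m (hmin s ⟨hs.1, hs.2.le⟩) x
    rw [hTs] at hkey
    -- hkey : δ * q ≤ Q (T s f) x
    have h5 : δ * (-q) ≤ δ * max 0 (-q) :=
      mul_le_mul_of_nonneg_left (le_max_right 0 (-q)) hδ0.le
    have h6 : δ * max 0 (-q) < δ * C := by
      rw [hC]
      nlinarith
    show -Q (T s f) x < C * (ε * Real.exp (-(C * s)))
    rw [← hq] at hkey
    have h7 : δ * -q = -(δ * q) := by ring
    have h8 : C * (ε * Real.exp (-(C * s))) = δ * C := by rw [hδ]; ring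
    linarith
  have hlt : -(ε * Real.exp (-(C * t))) < 0 := by
    have := mul_pos hε0 (Real.exp_pos (-(C * t)))
    linarith
  have : m - T t f x < 0 := lt_of_le_of_lt hmain hlt
  linarith
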